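/- Let λ be a partition and k ≥ 1. If λ has at least k cells strictly to the right of column k (i.e., Σᵢ max(λᵢ − k, 0) ≥ k), then there exists a k-deletion δ of λ whose first k columns agree with those of λ, i.e., min(δᵢ, k) = min(λᵢ, k) for all i. -/
import Mathlib


/-- A partition: a nonincreasing sequence of naturals (rows indexed from 0),
with finitely many nonzero parts. -/
def IsPartition (f : ℕ → ℕ) : Prop :=
  (∀ ⦃i j : ℕ⦄, i ≤ j → f j ≤ f i) ∧ {i | f i ≠ 0}.Finite

/-- The number of cells of a partition. -/
noncomputable def psize (f : ℕ → ℕ) : ℕ := ∑ᶠ i, f i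

/-- `δ` is a `k`-deletion of `f`: a partition contained in `f` with `k` fewer cells. -/
def IsDeletion (k : ℕ) (δ f : ℕ → ℕ) : Prop :=
  IsPartition δ ∧ (∀ i, δ i ≤ f i) ∧ psize f = psize δ + k

/-- The conjugate: `conj f c` is the number of cells in (0-indexed) column `c`. -/
noncomputable def conj (f : ℕ → ℕ) (c : ℕ) : ℕ := Set.ncard {i | c < f i}

/-- If λ has at least k cells strictly to the right of column k, then some k-deletion
of λ agrees with λ on the first k columns. -/
lemma deletion_aux (k : ℕ) (hk : 1 ≤ k) :
    ∀ m (f : ℕ → ℕ), IsPartition f → m ≤ ∑ᶠ i, (f i - k) →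
    ∃ δ : ℕ → ℕ, IsDeletion m δ f ∧ ∀ i, min (δ i) k = min (f i) k := by
  intro m
  induction m with
  | zero =>
    intro f hf _
    exact ⟨f, ⟨hf, fun i => le_rfl, rfl⟩, fun i => rfl⟩
  | succ m ih =>
    intro f hf hm
    -- the finset containing the support of f
    set s : Finset ℕ := hf.2.toFinset with hs
    have hsupf : Function.support f ⊆ s := by
      intro i hi; simp [hs, Set.Finite.mem_toFinset]; exact hi
    have hsupfk : Function.support (fun i => f i - k) ⊆ s := by
      intro i hi
      apply hsupf
      simp only [Function.mem_support] at hi ⊢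
      omega
    have hfin : ∑ᶠ i, (f i - k) = ∑ i ∈ s, (f i - k) :=
      finsum_eq_sum_of_support_subset _ hsupfk
    -- there is a row with f i > k
    have hex : ∃ i, k < f i := by
      by_contra hc
      push_neg at hc
      have : ∑ᶠ i, (f i - k) = 0 := by
        rw [hfin]
        apply Finset.sum_eq_zero
        intro i _
        have := hc i; omega
      omega
    -- the set of such rows as a finset
    have hexs : ∃ i ∈ s, k < f i := by
      obtain ⟨i, hi⟩ := hex
      exact ⟨i, hsupf (by simp only [Function.mem_support]; omega), hi⟩
    set A : Finset ℕ := s.filter (fun i => k < f i) with hA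
    have hAne : A.Nonempty := by
      obtain ⟨i, his, hi⟩ := hexs
      exact ⟨i, by simp [hA, his, hi]⟩
    set i₀ : ℕ := A.max' hAne with hi₀
    have hi₀k : k < f i₀ := by
      have := A.max'_mem hAne
      simp [hA] at this; exact this.2
    have hafter : ∀ j, i₀ < j → f j ≤ k := by
      intro j hj
      by_contra hc
      push_neg at hc
      have hjA : j ∈ A := by
        refine Finset.mem_filter.2 ⟨hsupf ?_, hc⟩
        simp only [Function.mem_support]; omega
      have := A.le_max' j hjA
      omega
    set g : ℕ → ℕ := Function.update f i₀ (f i₀ - 1) with hg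
    have hgval : ∀ i, g i = if i = i₀ then f i₀ - 1 else f i := by
      intro i
      by_cases hi : i = i₀ <;> simp [hg, Function.update, hi]
    have hgle : ∀ i, g i ≤ f i := by
      intro i; rw [hgval]; split
      · next h => rw [h]; omega
      · exact le_rfl
    -- g is a partition
    have hgpart : IsPartition g := by
      constructor
      · intro i j hij
        have hmono := hf.1 hij
        rw [hgval, hgval]
        split_ifs with h1 h2 h2
        · omega
        · rw [h1] at hmono; omega
        · have hlt : i₀ < j := by omega
          have h3 : f j ≤ k := hafter j hlt
          omega
        · exact hmono
      · apply hf.2.subset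
        intro i hi
        simp only [Set.mem_setOf_eq] at hi ⊢
        have := hgle i; omega
    have hsupg : Function.support g ⊆ s := by
      intro i hi
      apply hsupf
      simp only [Function.mem_support] at hi ⊢
      have := hgle i; omega
    have hi₀s : i₀ ∈ s := hsupf (by simp only [Function.mem_support]; omega)
    -- psize f = psize g + 1
    have hsum : ∀ (F : ℕ → ℕ), Function.support F ⊆ s → ∑ᶠ i, F i = ∑ i ∈ s, F i :=
      fun F hF => finsum_eq_sum_of_support_subset _ hF
    have hsplit : ∑ i ∈ s, f i = f i₀ + ∑ i ∈ s.erase i₀, f i :=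
      (Finset.add_sum_erase s f hi₀s).symm
    have hsplitg : ∑ i ∈ s, g i = (f i₀ - 1) + ∑ i ∈ s.erase i₀, f i := by
      rw [← Finset.add_sum_erase s g hi₀s, hgval, if_pos rfl]
      congr 1
      apply Finset.sum_congr rfl
      intro i hi
      rw [hgval, if_neg (Finset.ne_of_mem_erase hi)]
    have hpsize : psize f = psize g + 1 := by
      unfold psize
      rw [hsum f hsupf, hsum g hsupg, hsplit, hsplitg]
      omega
    -- sum of (g i - k)
    have hsupgk : Function.support (fun i => g i - k) ⊆ s := by
      intro i hi
      apply hsupg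
      simp only [Function.mem_support] at hi ⊢
      omega
    have hmk : m ≤ ∑ᶠ i, (g i - k) := by
      have h1 : ∑ᶠ i, (g i - k) = ∑ i ∈ s, (g i - k) :=
        finsum_eq_sum_of_support_subset _ hsupgk
      have h2 : ∑ i ∈ s, (g i - k) = (f i₀ - 1 - k) + ∑ i ∈ s.erase i₀, (f i - k) := by
        rw [← Finset.add_sum_erase s (fun i => g i - k) hi₀s, hgval, if_pos rfl]
        congr 1
        apply Finset.sum_congr rfl
        intro i hi
        rw [hgval, if_neg (Finset.ne_of_mem_erase hi)]
      have h3 : ∑ i ∈ s, (f i - k) = (f i₀ - k) + ∑ i ∈ s.erase i₀, (f i - k) :=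
        (Finset.add_sum_erase s (fun i => f i - k) hi₀s).symm
      rw [hfin, h3] at hm
      rw [h1, h2]
      omega
    obtain ⟨δ, ⟨hδpart, hδle, hδsize⟩, hδmin⟩ := ih g hgpart hmk
    refine ⟨δ, ⟨hδpart, fun i => le_trans (hδle i) (hgle i), ?_⟩, ?_⟩
    · rw [hpsize, hδsize]; ring
    · intro i
      rw [hδmin i, hgval]
      split
      · subst i; omega
      · rfl

theorem deletion_fixing_left_columns (k : ℕ) (hk : 1 ≤ k) (f : ℕ → ℕ)
    (hf : IsPartition f) (h : k ≤ ∑ᶠ i, (f i - k)) :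
    ∃ δ : ℕ → ℕ, IsDeletion k δ f ∧ ∀ i, min (δ i) k = min (f i) k :=
  deletion_aux k hk k f hf h
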